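/- Let ℓ, q ∈ ℕ. Suppose A ⊆ ℕ satisfies (A − A) ∩ {h_ℓ(n) : n ∈ ℤ} ⊆ {0}. Let x ∈ ℤ and let A' ⊆ {y ∈ ℕ : x + λ(q)·y ∈ A}. Then (A' − A') ∩ {h_{qℓ}(n) : n ∈ ℤ} ⊆ {0}. -/
import Mathlib


set_option linter.unusedVariables false

open scoped Classical

noncomputable section

/-- `e(t) = e^{2πit}`. -/
def eC (t : ℝ) : ℂ := Complex.exp (2 * Real.pi * Complex.I * t)

/-- Distance from `x` to the nearest integer, `‖x‖_{ℝ/ℤ}`. -/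
def distZ (x : ℝ) : ℝ := |x - round x|

/-- Evaluation of an integer polynomial at a `p`-adic integer. -/
def pEval (p : ℕ) [Fact p.Prime] (h : Polynomial ℤ) (z : ℤ_[p]) : ℤ_[p] :=
  Polynomial.aeval z h

/-- Multiplicity of `z` as a root of `h`, viewed over `ℤ_[p]`. -/
def pMult (p : ℕ) [Fact p.Prime] (h : Polynomial ℤ) (z : ℤ_[p]) : ℕ :=
  (h.map (Int.castRingHom ℤ_[p])).rootMultiplicity z

/-- The congruence `a ≡ z (mod p^v)` in `ℤ_[p]`. -/
def pCong (p : ℕ) [Fact p.Prime] (v : ℕ) (a : ℤ) (z : ℤ_[p]) : Prop :=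
  ((p : ℤ_[p]) ^ v) ∣ ((a : ℤ_[p]) - z)

/-- Real evaluation of an integer polynomial. -/
def evalR (P : Polynomial ℤ) (x : ℝ) : ℝ := Polynomial.aeval x P

end

/-- A completely multiplicative function positive at primes is positive at positive
naturals. -/
lemma lamPosAux (lam : ℕ → ℕ) (h1 : lam 1 = 1)
    (hmul : ∀ m n : ℕ, lam (m * n) = lam m * lam n)
    (hp : ∀ p : ℕ, p.Prime → 0 < lam p) : ∀ n : ℕ, 0 < n → 0 < lam n := by
  intro n
  induction n using Nat.strong_induction_on with
  | _ n ih =>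
    intro hn
    rcases eq_or_ne n 1 with rfl | hne
    · simp [h1]
    · have h2 : 2 ≤ n := by omega
      have hpf : n.minFac.Prime := Nat.minFac_prime hne
      have hdvd : n.minFac ∣ n := Nat.minFac_dvd n
      obtain ⟨m, hm⟩ := hdvd
      have hm0 : 0 < m := by
        rcases Nat.eq_zero_or_pos m with h0 | h0
        · rw [h0, Nat.mul_zero] at hm; omega
        · exact h0
      have hmlt : m < n := by
        have := hpf.two_le
        nlinarith
      rw [hm, hmul]
      exact Nat.mul_pos (hp _ hpf) (ih m hmlt hm0)

/-- inheritance property of auxiliary polynomials. If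
`(A - A) ∩ h_ℓ(ℤ) ⊆ {0}`, `x ∈ ℤ`, and `A' ⊆ {y ∈ ℕ : x + λ(q)y ∈ A}`, then
`(A' - A') ∩ h_{qℓ}(ℤ) ⊆ {0}`. -/
theorem stmt6
    (k : ℕ) (hk : 2 ≤ k)
    (h : Polynomial ℤ) (hdeg : h.natDegree = k) (hlead : 0 < h.leadingCoeff)
    (hint : ∀ q : ℕ, 0 < q → ∃ n : ℤ, (q : ℤ) ∣ h.eval n)
    (hposh : ∀ n : ℤ, 0 < n →
      0 < h.eval n ∧ 0 < h.derivative.eval n ∧ 0 < h.derivative.derivative.eval n)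
    (z : ∀ (p : ℕ) (hp : Fact p.Prime), @PadicInt p hp)
    (hz : ∀ (p : ℕ) (hp : Fact p.Prime), @pEval p hp h (z p hp) = 0)
    (lam : ℕ → ℕ)
    (hlam1 : lam 1 = 1)
    (hlamMul : ∀ m n : ℕ, lam (m * n) = lam m * lam n)
    (hlamP : ∀ (p : ℕ) (hp : Fact p.Prime), lam p = p ^ @pMult p hp h (z p hp))
    (rres : ℕ → ℤ)
    (hrRange : ∀ ℓ : ℕ, 0 < ℓ → -(ℓ : ℤ) < rres ℓ ∧ rres ℓ ≤ 0)
    (hrDvd : ∀ ℓ : ℕ, 0 < ℓ → (ℓ : ℤ) ∣ h.eval (rres ℓ))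
    (hrCong : ∀ ℓ : ℕ, 0 < ℓ → ∀ (p : ℕ) (hp : Fact p.Prime), p ∣ ℓ →
      @pCong p hp (ℓ.factorization p) (rres ℓ) (z p hp))
    (haux : ℕ → Polynomial ℤ)
    (hauxDef : ∀ (ℓ : ℕ) (x : ℤ), (lam ℓ : ℤ) * (haux ℓ).eval x = h.eval (rres ℓ + ℓ * x))
    (ℓ q : ℕ) (hℓ : 0 < ℓ) (hq : 0 < q)
    (A : Set ℤ) (hA : A ⊆ {n : ℤ | 0 < n})
    (hAdiff : ∀ a ∈ A, ∀ b ∈ A, (∃ n : ℤ, (haux ℓ).eval n = a - b) → a - b = 0)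
    (x : ℤ) (A' : Set ℤ)
    (hA' : A' ⊆ {y : ℤ | 0 < y ∧ x + (lam q : ℤ) * y ∈ A}) :
    ∀ a ∈ A', ∀ b ∈ A', (∃ n : ℤ, (haux (q * ℓ)).eval n = a - b) → a - b = 0 := by
  -- positivity of lam
  have hlamPosPrime : ∀ p : ℕ, p.Prime → 0 < lam p := by
    intro p hp
    haveI : Fact p.Prime := ⟨hp⟩
    rw [hlamP p ⟨hp⟩]
    exact pow_pos hp.pos _
  have hlampos : ∀ n : ℕ, 0 < n → 0 < lam n := lamPosAux lam hlam1 hlamMul hlamPosPrime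
  have hlamq : 0 < lam q := hlampos q hq
  have hlaml : 0 < lam ℓ := hlampos ℓ hℓ
  -- ℓ divides rres (q*ℓ) - rres ℓ
  have hql : 0 < q * ℓ := Nat.mul_pos hq hℓ
  have hdvd : (ℓ : ℤ) ∣ (rres (q * ℓ) - rres ℓ) := by
    set d : ℤ := rres (q * ℓ) - rres ℓ with hd
    rw [Int.natCast_dvd]
    rw [Nat.dvd_iff_prime_pow_dvd_dvd]
    intro p j hp hpj
    rcases Nat.eq_zero_or_pos j with rfl | hj
    · simp
    have hpprime : p.Prime := by rw [Nat.prime_iff]; exact hp.prime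
    haveI : Fact p.Prime := ⟨hpprime⟩
    have hpl : p ∣ ℓ := dvd_trans (dvd_pow_self p hj.ne') hpj
    have hpql : p ∣ q * ℓ := hpl.mul_left q
    have hje : j ≤ ℓ.factorization p :=
      (Nat.Prime.pow_dvd_iff_le_factorization hpprime hℓ.ne').mp hpj
    have hc1 := hrCong ℓ hℓ p ⟨hpprime⟩ hpl
    have hc2 := hrCong (q * ℓ) hql p ⟨hpprime⟩ hpql
    unfold pCong at hc1 hc2
    have hfe : ℓ.factorization p ≤ (q * ℓ).factorization p := by
      rw [Nat.factorization_mul hq.ne' hℓ.ne']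
      simp
    have hc2' : ((p : ℤ_[p]) ^ ℓ.factorization p) ∣ ((rres (q * ℓ) : ℤ_[p]) - z p ⟨hpprime⟩) :=
      dvd_trans (pow_dvd_pow _ hfe) hc2
    have hdiff : ((p : ℤ_[p]) ^ ℓ.factorization p) ∣ ((d : ℤ_[p])) := by
      have : ((d : ℤ_[p])) = ((rres (q * ℓ) : ℤ_[p]) - z p ⟨hpprime⟩)
          - ((rres ℓ : ℤ_[p]) - z p ⟨hpprime⟩) := by
        push_cast [hd]; ring
      rw [this]
      exact dvd_sub hc2' hc1
    have hint' : ((p : ℤ) ^ ℓ.factorization p) ∣ d :=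
      (PadicInt.pow_p_dvd_int_iff _ _).mp hdiff
    have hfin : ((p : ℤ) ^ j) ∣ d := dvd_trans (pow_dvd_pow _ hje) hint'
    rw [← Nat.cast_pow, Int.natCast_dvd] at hfin
    exact hfin
  obtain ⟨c, hc⟩ := hdvd
  -- the key identity: lam q * (haux (q*ℓ)).eval n = (haux ℓ).eval (c + q * n)
  have hkey : ∀ n : ℤ, (lam q : ℤ) * (haux (q * ℓ)).eval n = (haux ℓ).eval (c + q * n) := by
    intro n
    have h1 := hauxDef (q * ℓ) n
    have h2 := hauxDef ℓ (c + q * n)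
    have harg : rres ℓ + (ℓ : ℤ) * (c + q * n) = rres (q * ℓ) + ((q * ℓ : ℕ) : ℤ) * n := by
      push_cast
      have : (ℓ : ℤ) * c = rres (q * ℓ) - rres ℓ := hc.symm
      linarith [mul_comm (ℓ : ℤ) (c + q * n)]
    rw [harg, ← h1] at h2
    rw [hlamMul q ℓ] at h2
    have hl0 : (lam ℓ : ℤ) ≠ 0 := by exact_mod_cast hlaml.ne'
    have := h2
    push_cast at this
    -- this : (lam ℓ : ℤ) * (haux ℓ).eval (c+q*n) = lam q * lam ℓ * (haux (q*ℓ)).eval n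
    apply mul_left_cancel₀ hl0
    linarith [this, mul_comm ((lam q : ℤ) * (lam ℓ : ℤ)) ((haux (q * ℓ)).eval n)]
  -- main argument
  intro a ha b hb ⟨n, hn⟩
  obtain ⟨hapos, haA⟩ := hA' ha
  obtain ⟨hbpos, hbA⟩ := hA' hb
  have hAd := hAdiff _ haA _ hbA
  have hwit : ∃ m : ℤ, (haux ℓ).eval m = (x + (lam q : ℤ) * a) - (x + (lam q : ℤ) * b) := by
    refine ⟨c + q * n, ?_⟩
    rw [← hkey n, hn]
    ring
  have hz0 := hAd hwit
  have : (lam q : ℤ) * (a - b) = 0 := by linarith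
  have hq0 : (lam q : ℤ) ≠ 0 := by exact_mod_cast hlamq.ne'
  exact (mul_eq_zero.mp this).resolve_left hq0
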